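/- For every x > 3(2√3 − 3) ≈ 1.392 and every η > 0, the derivative ∂f(x,η)/∂x = 1/(x·sqrt((x+η−1)²+4η)) − (1/x²)·log((x+η−1+sqrt((x+η−1)²+4η))/(2η)) is strictly negative. -/

import Mathlib

set_option maxHeartbeats 1000000

open Real

lemma pade1 {t : ℝ} (ht : 1 ≤ t) : 2 * (t - 1) / (t + 1) ≤ Real.log t := by
  have h0 : (0:ℝ) < t := by linarith
  set f : ℝ → ℝ := fun s => Real.log s + 4 * (s + 1)⁻¹ with hf
  have hmono : MonotoneOn f (Set.Ici (1:ℝ)) := by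
    apply monotoneOn_of_deriv_nonneg (convex_Ici 1)
    · apply ContinuousOn.add
      · exact fun s hs => (Real.continuousAt_log (by simp at hs; linarith)).continuousWithinAt
      · apply ContinuousOn.mul continuousOn_const
        exact ContinuousOn.inv₀ (by fun_prop) (fun s hs => by simp at hs; positivity)
    · intro s hs
      simp only [interior_Ici, Set.mem_Ioi] at hs
      apply DifferentiableAt.differentiableWithinAt
      apply DifferentiableAt.add
      · exact Real.differentiableAt_log (by linarith)
      · exact DifferentiableAt.mul (differentiableAt_const _)
          (DifferentiableAt.inv (by fun_prop) (by positivity))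
    · intro s hs
      simp only [interior_Ici, Set.mem_Ioi] at hs
      have hs0 : (0:ℝ) < s := by linarith
      have hs1 : s + 1 ≠ 0 := by positivity
      have hd : HasDerivAt f (s⁻¹ + 4 * (-(1) / (s+1)^2)) s := by
        apply HasDerivAt.add (Real.hasDerivAt_log (ne_of_gt hs0))
        exact HasDerivAt.const_mul 4 (HasDerivAt.inv ((hasDerivAt_id s).add_const 1) hs1)
      rw [hd.deriv]
      have heq : s⁻¹ + 4 * (-(1) / (s+1)^2) = (s-1)^2 / (s * (s+1)^2) := by
        field_simp; ring
      rw [heq]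
      positivity
  have h1 : f 1 ≤ f t := hmono (by simp) (by simpa using ht) ht
  have hft : f 1 = 2 := by simp [hf]; norm_num
  have key : 2 ≤ Real.log t + 4 * (t+1)⁻¹ := by rw [← hft]; exact h1
  have ht1 : (0:ℝ) < t + 1 := by linarith
  rw [div_le_iff₀ ht1]
  have h4 : 4 * (t+1)⁻¹ * (t+1) = 4 := by field_simp
  nlinarith [key]

lemma pade1_strict {t : ℝ} (ht : 1 < t) : 2 * (t - 1) / (t + 1) < Real.log t := by
  have h0 : (0:ℝ) < t := by linarith
  set s := Real.sqrt t with hs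
  have hs2 : s ^ 2 = t := Real.sq_sqrt h0.le
  have hs1 : 1 < s := by
    nlinarith [Real.sqrt_nonneg t, hs2]
  have hlog : Real.log t = 2 * Real.log s := by
    rw [← hs2, Real.log_pow]; push_cast; ring
  have hp := pade1 hs1.le
  rw [hlog]
  have h1 : 2 * (2 * (s - 1) / (s + 1)) ≤ 2 * Real.log s := by linarith
  refine lt_of_lt_of_le ?_ h1
  rw [show 2 * (2 * (s - 1) / (s + 1)) = 4 * (s - 1) / (s + 1) by ring]
  rw [div_lt_div_iff₀ (by nlinarith) (by linarith)]
  have h3 : 0 < (s - 1) ^ 3 := by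
    have : 0 < s - 1 := by linarith
    positivity
  nlinarith [hs2, h3]

/-- shifted strict Padé bound -/
lemma pade_shift {c u : ℝ} (hc : 0 < c) (hcu : c < u) :
    Real.log c + 2 * (u - c) / (u + c) < Real.log u := by
  have h1 : (1:ℝ) < u / c := (one_lt_div hc).2 hcu
  have := pade1_strict h1
  rw [Real.log_div (by linarith) (ne_of_gt hc)] at this
  have hu0 : 0 < u := hc.trans hcu
  have heq : 2 * (u / c - 1) / (u / c + 1) = 2 * (u - c) / (u + c) := by
    rw [div_eq_div_iff (by positivity) (by linarith)]
    field_simp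
  rw [heq] at this
  linarith


lemma poly16 {x η a S : ℝ} (hη : 0 < η) (hx1 : (1.392:ℝ) < x) (ha : a = x + η - 1)
    (ha0 : 0 < a) (hS2 : S ^ 2 = a ^ 2 + 4 * η) (hS0 : 0 < S) (hSa : a < S)
    (hge : 32 * η ≤ a + S) :
    x * ((a + S) + 2 * 16 * η) <
      (2.772 * ((a + S) + 2 * 16 * η) + 2 * ((a + S) - 2 * 16 * η)) * S := by
  have hS16 : 16 * η ≤ S := by linarith
  have hcoef : 0 < 4.772 * a + 24.704 * η - x := by rw [ha]; nlinarith
  nlinarith [mul_nonneg (sub_nonneg.2 hS16) hcoef.le, hS2, sq_nonneg (x - 1.392),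
    sq_nonneg (η - 0.016), mul_pos hη hη, ha0, hSa, hη, hx1, ha]

lemma poly8 {x η a S : ℝ} (hη : 0 < η) (hx1 : (1.392:ℝ) < x) (ha : a = x + η - 1)
    (ha0 : 0 < a) (hS2 : S ^ 2 = a ^ 2 + 4 * η) (hS0 : 0 < S) (hSa : a < S)
    (hge : 16 * η ≤ a + S) :
    x * ((a + S) + 2 * 8 * η) <
      (2.079 * ((a + S) + 2 * 8 * η) + 2 * ((a + S) - 2 * 8 * η)) * S := by
  have hS8 : 8 * η ≤ S := by linarith
  have hcoef : 0 < 4.079 * a + 1.264 * η - x := by rw [ha]; nlinarith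
  nlinarith [mul_nonneg (sub_nonneg.2 hS8) hcoef.le, hS2, sq_nonneg (x - 1.392),
    sq_nonneg (η - 0.056), mul_pos hη hη, ha0, hSa, hη, hx1, ha]

lemma polyE {x η a S : ℝ} (hη : 0 < η) (hx1 : (1.392:ℝ) < x) (ha : a = x + η - 1)
    (ha0 : 0 < a) (hS2 : S ^ 2 = a ^ 2 + 4 * η) (hS0 : 0 < S) (hSa : a < S)
    (hge : 2 * 2.72 * η ≤ a + S) (hlt : a + S < 16 * η) :
    x * ((a + S) + 2 * 2.72 * η) <
      (1 * ((a + S) + 2 * 2.72 * η) + 2 * ((a + S) - 2 * 2.72 * η)) * S := by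
  have hr1 : 7.3984 * η - 2.72 * a ≤ 1 := by
    rcases le_or_gt (2 * 2.72 * η) a with h | h
    · nlinarith
    · have hS' : 2 * 2.72 * η - a ≤ S := by linarith
      nlinarith [hS2, sq_nonneg (2 * 2.72 * η - a)]
  have hr2 : 1 < 64 * η - 8 * a := by
    have hS' : S < 16 * η - a := by linarith
    nlinarith [hS2, hS0]
  have hu' : (0:ℝ) ≤ x - 1.392 := by linarith
  have hw : (0:ℝ) ≤ 56 * η - 8 * x + 7 := by rw [ha] at hr2; linarith
  have hp3 : (0:ℝ) ≤ 2.72 * x - 1.72 - 4.6784 * η := by rw [ha] at hr1; linarith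
  rcases le_or_gt 0 (3 * a - 2 * 2.72 * η - x) with hcoef | hcoef
  · have hSe : 2.72 * η ≤ S := by linarith
    nlinarith [mul_nonneg (sub_nonneg.2 hSe) hcoef, hS2, ha, hη, hu', hw,
      mul_nonneg hu' hw, sq_nonneg (x - 1.642), sq_nonneg (η - 0.112), mul_pos hη hη]
  · have hSub : 1.44 * S ≤ a ^ 2 + 4 * η + 0.5184 := by
      nlinarith [sq_nonneg (S - 0.72), hS2]
    have hkey : 0 ≤ (a ^ 2 + 4 * η + 0.5184 - 1.44 * S) * (2 * 2.72 * η + x - 3 * a) := by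
      apply mul_nonneg (by linarith) (by linarith)
    have hC : 0 < 1.44 * (3 * (a ^ 2 + 4 * η) - x * a - 2 * x * 2.72 * η) -
        (a ^ 2 + 4 * η + 0.5184) * (2 * 2.72 * η + x - 3 * a) := by
      rw [ha]
      nlinarith [mul_nonneg (mul_nonneg hw hw) hp3, mul_nonneg hw hp3,
        mul_nonneg (mul_nonneg hu' hw) hp3, mul_nonneg hu' hp3,
        mul_nonneg (mul_nonneg hu' hu') hp3, mul_nonneg hu' hw,
        mul_nonneg hu' hu', hη]
    nlinarith [hkey, hC]

lemma poly1 {x η a S : ℝ} (hη : 0 < η) (hx1 : (1.392:ℝ) < x) (ha : a = x + η - 1)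
    (ha0 : 0 < a) (hS2 : S ^ 2 = a ^ 2 + 4 * η) (hS0 : 0 < S) (hSa : a < S)
    (hub : a + S < 2 * 2.72 * η) :
    x * ((a + S) + 2 * 1 * η) <
      (0 * ((a + S) + 2 * 1 * η) + 2 * ((a + S) - 2 * 1 * η)) * S := by
  have hM2 : (η + x + 1) ^ 2 = S ^ 2 + 4 * x := by rw [hS2, ha]; ring
  have hMS : S < η + x + 1 := by nlinarith [hM2, hS0, hx1, hη]
  have hMSpos : 0 < η + x + 1 + S := by linarith
  have hM2x : x * (η + x + 1) ^ 2 = x * (S ^ 2 + 4 * x) := by rw [hM2]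
  rcases le_or_gt (2 + 2 * η) x with h1 | h1
  · have hb : 0 ≤ (x - 2) * (η + x - 1 + S) := by
      apply mul_nonneg (by linarith) (by linarith)
    nlinarith [hM2x, hb, hMSpos, hη, mul_pos hη (show (0:ℝ) < x by linarith)]
  rcases le_or_gt 2 x with h2 | h2
  · have hb : 0 ≤ (x - 2) * (η + x + 1 + S) := by
      apply mul_nonneg (by linarith) (by linarith)
    nlinarith [hM2x, hb, hMSpos, mul_pos hη (show (0:ℝ) < x by linarith), h1]
  · have hb : 0 ≤ (2 - x) * (2 * 2.72 * η - a - S) := by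
      apply mul_nonneg (by linarith) (by linarith)
    have hc' : 0 < η * (5.44 * x - 6.88) := by
      apply mul_pos hη (by linarith)
    nlinarith [hM2x, hb, hc', hMSpos, mul_pos hη (show (0:ℝ) < x by linarith), ha]

lemma case_red {L c x η a S u : ℝ} (hη : 0 < η) (hS0 : 0 < S) (hc : 0 < c) (hu : c ≤ u)
    (hud : 2 * η * u = a + S)
    (hpoly : x * ((a + S) + 2 * c * η) <
      (L * ((a + S) + 2 * c * η) + 2 * ((a + S) - 2 * c * η)) * S) :
    x / S < L + 2 * (u - c) / (u + c) := by
  have hu0 : 0 < u := lt_of_lt_of_le hc hu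
  have hden : 0 < u + c := by linarith
  rw [div_lt_iff₀ hS0]
  have e1 : L + 2 * (u - c) / (u + c) = (L * (u + c) + 2 * (u - c)) / (u + c) := by
    field_simp
  rw [e1, div_mul_eq_mul_div, lt_div_iff₀ hden]
  have h2η : (0:ℝ) < 2 * η := by linarith
  rw [← mul_lt_mul_iff_left₀ h2η]
  have e2 : x * (u + c) * (2 * η) = x * ((a + S) + 2 * c * η) := by rw [← hud]; ring
  have e3 : (L * (u + c) + 2 * (u - c)) * S * (2 * η) =
      (L * ((a + S) + 2 * c * η) + 2 * ((a + S) - 2 * c * η)) * S := by rw [← hud]; ring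
  rw [e2, e3]; exact hpoly

theorem stmt_15 (x η : ℝ) (hx : 3 * (2 * Real.sqrt 3 - 3) < x) (hη : 0 < η) :
    1 / (x * Real.sqrt ((x + η - 1) ^ 2 + 4 * η)) -
      (1 / x ^ 2) *
        Real.log ((x + η - 1 + Real.sqrt ((x + η - 1) ^ 2 + 4 * η)) / (2 * η)) < 0 := by
  have hs3 : (1.732:ℝ) < Real.sqrt 3 := by
    nlinarith [Real.sq_sqrt (show (0:ℝ) ≤ 3 by norm_num), Real.sqrt_nonneg 3]
  have hx1 : (1.392:ℝ) < x := by nlinarith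
  set a := x + η - 1 with ha
  have ha0 : 0 < a := by rw [ha]; linarith
  set S := Real.sqrt (a ^ 2 + 4 * η) with hS
  have hS2 : S ^ 2 = a ^ 2 + 4 * η := Real.sq_sqrt (by positivity)
  have hS0 : 0 < S := Real.sqrt_pos.2 (by positivity)
  have hSa : a < S := by nlinarith
  set u := (a + S) / (2 * η) with hu
  have hud : 2 * η * u = a + S := by rw [hu]; field_simp
  have h2η : (0:ℝ) < 2 * η := by linarith
  have hu1 : 1 < u := by
    rw [hu, lt_div_iff₀ (by linarith)]
    nlinarith [hS2, hS0, hx1]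
  have key : x / S < Real.log u := by
    rcases le_or_gt 16 u with hc | hc
    · -- u ≥ 16
      have hge : 32 * η ≤ a + S := by nlinarith [hud, hc]
      have hlb : Real.log 16 + 2 * (u - 16) / (u + 16) ≤ Real.log u := by
        rcases eq_or_lt_of_le hc with h | h
        · rw [← h]; norm_num
        · exact (pade_shift (by norm_num) h).le
      have hl2b : (2.772:ℝ) < Real.log 16 := by
        rw [show (16:ℝ) = 2 ^ 4 by norm_num, Real.log_pow]
        push_cast
        nlinarith [Real.log_two_gt_d9]
      have hpoly : x / S < 2.772 + 2 * (u - 16) / (u + 16) := by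
        exact case_red hη hS0 (by norm_num) hc hud (poly16 hη hx1 ha ha0 hS2 hS0 hSa hge)
      linarith
    rcases le_or_gt 8 u with hc8 | hc8
    · -- 8 ≤ u < 16
      have hge : 16 * η ≤ a + S := by nlinarith [hud, hc8]
      have hlb : Real.log 8 + 2 * (u - 8) / (u + 8) ≤ Real.log u := by
        rcases eq_or_lt_of_le hc8 with h | h
        · rw [← h]; norm_num
        · exact (pade_shift (by norm_num) h).le
      have hl2b : (2.079:ℝ) < Real.log 8 := by
        rw [show (8:ℝ) = 2 ^ 3 by norm_num, Real.log_pow]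
        push_cast
        nlinarith [Real.log_two_gt_d9]
      have hpoly : x / S < 2.079 + 2 * (u - 8) / (u + 8) := by
        exact case_red hη hS0 (by norm_num) hc8 hud (poly8 hη hx1 ha ha0 hS2 hS0 hSa hge)
      linarith
    rcases le_or_gt 2.72 u with hce | hce
    · -- 2.72 ≤ u < 8
      have hge : 2 * 2.72 * η ≤ a + S := by nlinarith [hud, hce]
      have hlt : a + S < 16 * η := by nlinarith [hud, hc8]
      have hlb : Real.log 2.72 + 2 * (u - 2.72) / (u + 2.72) ≤ Real.log u := by
        rcases eq_or_lt_of_le hce with h | h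
        · rw [← h]; norm_num
        · exact (pade_shift (by norm_num) h).le
      have hl2b : (1:ℝ) < Real.log 2.72 := by
        have h1 : Real.exp 1 < 2.72 := by
          nlinarith [Real.exp_one_lt_d9]
        calc (1:ℝ) = Real.log (Real.exp 1) := by rw [Real.log_exp]
          _ < Real.log 2.72 := Real.log_lt_log (Real.exp_pos 1) h1
      have hpoly : x / S < 1 + 2 * (u - 2.72) / (u + 2.72) := by
        exact case_red hη hS0 (by norm_num) hce hud (polyE hη hx1 ha ha0 hS2 hS0 hSa hge hlt)
      linarith
    · -- 1 < u < 2.72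
      have hub : a + S < 2 * 2.72 * η := by nlinarith [hud, hce]
      have hlb := pade1_strict hu1
      have hpoly : x / S < 0 + 2 * (u - 1) / (u + 1) := by
        exact case_red hη hS0 (by norm_num) hu1.le hud (poly1 hη hx1 ha ha0 hS2 hS0 hSa hub)
      linarith
  have hx0 : (0:ℝ) < x := by linarith
  have h2 : 1 / (x * S) = 1 / x ^ 2 * (x / S) := by
    field_simp
  rw [h2]
  have h3 : 1 / x ^ 2 * (x / S) < 1 / x ^ 2 * Real.log u :=
    mul_lt_mul_of_pos_left key (by positivity)
  linarith
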